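/- For any two finite tuples of rationals q⃗₁ and q⃗₂ of the same length with the same order type (q₁ᵢ < q₁ⱼ ↔ q₂ᵢ < q₂ⱼ and q₁ᵢ = q₁ⱼ ↔ q₂ᵢ = q₂ⱼ for all i,j), there exists a boundedly additive order automorphism of ℚ mapping q⃗₁ onto q⃗₂ componentwise. -/

import Mathlib

/-- An order automorphism of ℚ is boundedly additive if, outside a closed bounded interval
`[q₁,r₁]` mapped onto `[q₂,r₂]`, it acts by addition of constants. -/
def BoundedlyAdditive (α : ℚ ≃o ℚ) : Prop :=
  ∃ q₁ r₁ q₂ r₂ : ℚ, q₁ ≤ r₁ ∧ q₂ ≤ r₂ ∧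
    α '' Set.Icc q₁ r₁ = Set.Icc q₂ r₂ ∧
    (∀ p, p < q₁ → α p = p + q₂ - q₁) ∧
    (∀ p, r₁ < p → α p = p + r₂ - r₁)

namespace BAaux

/-- Piecewise function: identity up to `c`, affine on `[c,a]` sending `a ↦ b`,
translation beyond `a`. -/
noncomputable def plFun (c a b : ℚ) (x : ℚ) : ℚ :=
  if x ≤ c then x else if x ≤ a then c + (b - c) / (a - c) * (x - c) else x + (b - a)

lemma plFun_strictMono {c a b : ℚ} (hca : c < a) (hcb : c < b) : StrictMono (plFun c a b) := by
  have hac : (0:ℚ) < a - c := by linarith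
  have hbc : (0:ℚ) < b - c := by linarith
  set L := (b - c) / (a - c) with hLdef
  have hL : 0 < L := div_pos hbc hac
  have hLa : L * (a - c) = b - c := by rw [hLdef]; field_simp
  have ev1 : ∀ x, x ≤ c → plFun c a b x = x := fun x hx => by unfold plFun; rw [if_pos hx]
  have ev2 : ∀ x, c < x → x ≤ a → plFun c a b x = c + L * (x - c) := fun x h1 h2 => by
    unfold plFun; rw [if_neg (by linarith), if_pos h2]
  have ev3 : ∀ x, a < x → plFun c a b x = x + (b - a) := fun x h1 => by
    unfold plFun; rw [if_neg (by linarith), if_neg (by linarith)]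
  have lb2 : ∀ x, c < x → c < c + L * (x - c) := fun x h1 => by
    nlinarith [mul_pos hL (show (0:ℚ) < x - c by linarith)]
  have ub2 : ∀ x, x ≤ a → c + L * (x - c) ≤ b := fun x h2 => by
    nlinarith [mul_le_mul_of_nonneg_left (show x - c ≤ a - c by linarith) (le_of_lt hL)]
  intro x y hxy
  rcases le_or_gt x c with hx1 | hx1
  · rcases le_or_gt y c with hy1 | hy1
    · rw [ev1 x hx1, ev1 y hy1]; exact hxy
    · rcases le_or_gt y a with hy2 | hy2
      · rw [ev1 x hx1, ev2 y hy1 hy2]; have := lb2 y hy1; linarith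
      · rw [ev1 x hx1, ev3 y hy2]; linarith
  · rcases le_or_gt x a with hx2 | hx2
    · rcases le_or_gt y a with hy2 | hy2
      · rw [ev2 x hx1 hx2, ev2 y (by linarith) hy2]
        nlinarith [mul_pos hL (show (0:ℚ) < y - x by linarith)]
      · rw [ev2 x hx1 hx2, ev3 y hy2]; have := ub2 x hx2; linarith
    · rw [ev3 x hx2, ev3 y (by linarith)]; linarith

lemma plFun_rightInverse {c a b : ℚ} (hca : c < a) (hcb : c < b) :
    Function.RightInverse (plFun c b a) (plFun c a b) := by
  have hac : (0:ℚ) < a - c := by linarith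
  have hbc : (0:ℚ) < b - c := by linarith
  intro x
  rcases le_or_gt x c with h | h
  · unfold plFun; rw [if_pos h, if_pos h]
  · rcases le_or_gt x b with h2 | h2
    · set M := (a - c) / (b - c) with hMdef
      have hM : 0 < M := div_pos hac hbc
      have hinner : plFun c b a x = c + M * (x - c) := by
        unfold plFun; rw [if_neg (by linarith), if_pos h2]
      have hpos : 0 < M * (x - c) := mul_pos hM (by linarith)
      have hMb : M * (b - c) = a - c := by rw [hMdef]; field_simp
      have hle : M * (x - c) ≤ a - c := by
        nlinarith [mul_le_mul_of_nonneg_left (show x - c ≤ b - c by linarith) (le_of_lt hM)]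
      rw [hinner]
      unfold plFun
      rw [if_neg (by linarith), if_pos (by linarith)]
      have hLM : (b - c) / (a - c) * M = 1 := by rw [hMdef]; field_simp
      have h3 : (b - c) / (a - c) * (c + M * (x - c) - c) = (b - c) / (a - c) * M * (x - c) := by
        ring
      rw [h3, hLM]; ring
    · have hinner : plFun c b a x = x + (a - b) := by
        unfold plFun; rw [if_neg (by linarith), if_neg (by linarith)]
      rw [hinner]
      unfold plFun
      rw [if_neg (by linarith), if_neg (by linarith)]
      ring

/-- The piecewise-linear order isomorphism. -/
noncomputable def pl {c a b : ℚ} (hca : c < a) (hcb : c < b) : ℚ ≃o ℚ :=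
  StrictMono.orderIsoOfRightInverse _ (plFun_strictMono hca hcb) _
    (plFun_rightInverse hca hcb)

lemma pl_apply {c a b : ℚ} (hca : c < a) (hcb : c < b) (x : ℚ) :
    pl hca hcb x = plFun c a b x := rfl

lemma pl_fix {c a b : ℚ} (hca : c < a) (hcb : c < b) {x : ℚ} (hx : x ≤ c) :
    pl hca hcb x = x := by
  rw [pl_apply]; unfold plFun; rw [if_pos hx]

lemma pl_top {c a b : ℚ} (hca : c < a) (hcb : c < b) :
    pl hca hcb a = b := by
  rw [pl_apply]; unfold plFun
  rw [if_neg (by linarith), if_pos le_rfl,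
    div_mul_cancel₀ _ (show a - c ≠ (0:ℚ) by linarith)]
  ring

lemma pl_BA {c a b : ℚ} (hca : c < a) (hcb : c < b) :
    BoundedlyAdditive (pl hca hcb) := by
  refine ⟨c, a, c, b, le_of_lt hca, le_of_lt hcb, ?_, ?_, ?_⟩
  · rw [OrderIso.image_Icc, pl_fix hca hcb le_rfl, pl_top]
  · intro p hp
    rw [pl_fix hca hcb (le_of_lt hp)]; ring
  · intro p hp
    rw [pl_apply]; unfold plFun
    rw [if_neg (by linarith), if_neg (by linarith)]; ring

lemma translation_BA (t : ℚ) : BoundedlyAdditive (OrderIso.addRight t) := by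
  refine ⟨0, 0, t, t, le_rfl, le_rfl, ?_, ?_, ?_⟩
  · rw [OrderIso.image_Icc]; simp [OrderIso.addRight_apply]
  · intro p _; simp [OrderIso.addRight_apply]
  · intro p _; simp [OrderIso.addRight_apply]

lemma BA_trans {α β : ℚ ≃o ℚ} (hα : BoundedlyAdditive α) (hβ : BoundedlyAdditive β) :
    BoundedlyAdditive (α.trans β) := by
  obtain ⟨q₁, r₁, q₂, r₂, hq1r1, hq2r2, himg, hlo, hhi⟩ := hα
  obtain ⟨s₁, t₁, s₂, t₂, hs1t1, hs2t2, himg', hlo', hhi'⟩ := hβ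
  set u : ℚ := min q₁ (s₁ - q₂ + q₁) - 1 with hu
  set v : ℚ := max r₁ (t₁ - r₂ + r₁) + 1 with hv
  have huq : u < q₁ := by
    simp only [hu]; have := min_le_left q₁ (s₁ - q₂ + q₁); linarith
  have hus : u + q₂ - q₁ < s₁ := by
    simp only [hu]; have := min_le_right q₁ (s₁ - q₂ + q₁); linarith
  have hvr : r₁ < v := by
    simp only [hv]; have := le_max_left r₁ (t₁ - r₂ + r₁); linarith
  have hvt : t₁ < v + r₂ - r₁ := by
    simp only [hv]; have := le_max_right r₁ (t₁ - r₂ + r₁); linarith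
  have huv : u ≤ v := by linarith
  have key_lo : ∀ p, p ≤ u → (α.trans β) p = p + (q₂ - q₁ + s₂ - s₁) := by
    intro p hp
    have hp1 : p < q₁ := by linarith
    have hα_p : α p = p + q₂ - q₁ := hlo p hp1
    simp only [OrderIso.trans_apply, hα_p]
    rw [hlo' _ (by linarith)]
    ring
  have key_hi : ∀ p, v ≤ p → (α.trans β) p = p + (r₂ - r₁ + t₂ - t₁) := by
    intro p hp
    have hp1 : r₁ < p := by linarith
    have hα_p : α p = p + r₂ - r₁ := hhi p hp1
    simp only [OrderIso.trans_apply, hα_p]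
    rw [hhi' _ (by linarith)]
    ring
  refine ⟨u, v, (α.trans β) u, (α.trans β) v, huv, (α.trans β).monotone huv, ?_, ?_, ?_⟩
  · rw [OrderIso.image_Icc]
  · intro p hp
    rw [key_lo p (le_of_lt hp), key_lo u le_rfl]; ring
  · intro p hp
    rw [key_hi p (le_of_lt hp), key_hi v le_rfl]; ring

lemma BA_refl : BoundedlyAdditive (OrderIso.refl ℚ) := by
  exact ⟨0, 0, 0, 0, le_rfl, le_rfl, by simp, fun p _ => by simp, fun p _ => by simp⟩

lemma finset_lemma (f : ℚ → ℚ) (s : Finset ℚ) (hf : StrictMonoOn f s) :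
    ∃ α : ℚ ≃o ℚ, BoundedlyAdditive α ∧ ∀ x ∈ s, α x = f x := by
  induction s using Finset.induction_on_max with
  | empty => exact ⟨OrderIso.refl ℚ, BA_refl, by simp⟩
  | insert a s hmax ih =>
    have hsub : StrictMonoOn f s := hf.mono (by
      intro x hx; simp only [Finset.coe_insert, Set.mem_insert_iff]; right; exact hx)
    obtain ⟨α, hαBA, hα⟩ := ih hsub
    rcases s.eq_empty_or_nonempty with rfl | hne
    · refine ⟨α.trans (OrderIso.addRight (f a - α a)), BA_trans hαBA (translation_BA _), ?_⟩
      intro x hx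
      simp only [Finset.mem_insert, Finset.notMem_empty, or_false] at hx
      subst hx
      simp [OrderIso.addRight_apply]
    · set c : ℚ := s.sup' hne f with hc
      have ha_mem : (a : ℚ) ∈ (↑(insert a s) : Set ℚ) := by simp
      have hca : c < α a := by
        obtain ⟨x₀, hx₀, hfx₀⟩ := s.exists_mem_eq_sup' hne f
        rw [hc, hfx₀, ← hα x₀ hx₀]
        exact α.strictMono (hmax x₀ hx₀)
      have hcb : c < f a := by
        obtain ⟨x₀, hx₀, hfx₀⟩ := s.exists_mem_eq_sup' hne f
        rw [hc, hfx₀]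
        exact hf (by simp [hx₀]) ha_mem (hmax x₀ hx₀)
      refine ⟨α.trans (pl hca hcb), BA_trans hαBA (pl_BA hca hcb), ?_⟩
      intro x hx
      simp only [Finset.mem_insert] at hx
      rcases hx with rfl | hx
      · simp only [OrderIso.trans_apply]
        exact pl_top hca hcb
      · simp only [OrderIso.trans_apply, hα x hx]
        exact pl_fix hca hcb (Finset.le_sup' f hx)

end BAaux

/-- Any two finite tuples of rationals with the same order type are related by a boundedly
additive order automorphism of ℚ. -/
theorem boundedlyAdditive_transitive_on_tuples {n : ℕ} (q₁ q₂ : Fin n → ℚ)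
    (hlt : ∀ i j, q₁ i < q₁ j ↔ q₂ i < q₂ j)
    (heq : ∀ i j, q₁ i = q₁ j ↔ q₂ i = q₂ j) :
    ∃ α : ℚ ≃o ℚ, BoundedlyAdditive α ∧ ∀ i, α (q₁ i) = q₂ i := by
  classical
  set f : ℚ → ℚ := fun x => if h : ∃ i, q₁ i = x then q₂ h.choose else 0 with hf
  have hfval : ∀ i, f (q₁ i) = q₂ i := by
    intro i
    have h : ∃ j, q₁ j = q₁ i := ⟨i, rfl⟩
    simp only [hf, dif_pos h]
    exact (heq _ _).mp h.choose_spec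
  have hmono : StrictMonoOn f ↑(Finset.image q₁ Finset.univ) := by
    intro x hx y hy hxy
    simp only [Finset.coe_image, Set.mem_image] at hx hy
    obtain ⟨i, _, rfl⟩ := hx
    obtain ⟨j, _, rfl⟩ := hy
    rw [hfval, hfval]
    exact (hlt i j).mp hxy
  obtain ⟨α, hBA, hα⟩ := BAaux.finset_lemma f _ hmono
  refine ⟨α, hBA, fun i => ?_⟩
  rw [hα (q₁ i) (by simp), hfval]
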